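/- There exists a finite alphabet A and a subshift (X,σ) of A^ℤ whose complexity function P_X(n) grows quadratically (P_X(n) = Θ(n²)) and whose automorphism group Aut(X) contains a free semigroup of rank 2; i.e., there exist φ,ψ ∈ Aut(X) such that the natural semigroup homomorphism from the free semigroup on two generators to Aut(X) sending the generators to φ and ψ is injective. (One such example is the subshift on the eight-letter alphabet {0,1,a,b,p,1p,ap,bp} consisting of: the all-0 sequence; all sequences that are 0 except at a single position, where the symbol is one of 1, a, b, p, 1p, ap, bp; and all sequences that are 0 except at two positions, one carrying p and the other carrying one of 1, a, b.) -/

import Mathlib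

open Filter Topology Pointwise

section Defs

variable {A : Type*}

/-- The left shift on bi-infinite sequences over `A`. -/
def shift (x : ℤ → A) : ℤ → A := fun i => x (i + 1)

/-- The word `w` occurs in `x` at position `j`. -/
def OccursAt {n : ℕ} (x : ℤ → A) (w : Fin n → A) (j : ℤ) : Prop :=
  ∀ i : Fin n, x (j + (i : ℤ)) = w i

/-- The word `w` belongs to the language of `X`. -/
def InLanguage (X : Set (ℤ → A)) {n : ℕ} (w : Fin n → A) : Prop :=
  ∃ x ∈ X, OccursAt x w 0

/-- The complexity function of `X`: the number of words of length `n` in the language. -/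
noncomputable def complexity (X : Set (ℤ → A)) (n : ℕ) : ℕ :=
  {w : Fin n → A | InLanguage X w}.ncard

/-- `x` is aperiodic: no positive shift fixes it. -/
def IsAperiodic (x : ℤ → A) : Prop := ∀ p : ℤ, 0 < p → (fun i => x (i + p)) ≠ x

/-- The subshift obtained from `X` by forbidding the word `w`. -/
def Forbid (X : Set (ℤ → A)) {n : ℕ} (w : Fin n → A) : Set (ℤ → A) :=
  {x ∈ X | ∀ j : ℤ, ¬ OccursAt x w j}

/-- `w` extends uniquely `L` times to the right and left in the language of `X`. -/
def ExtendsUniquely (X : Set (ℤ → A)) {n : ℕ} (w : Fin n → A) (L : ℕ) : Prop :=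
  ∃! u : Fin (n + 2 * L) → A,
    InLanguage X u ∧ ∀ i : Fin n, u ⟨L + (i : ℕ), by have := i.isLt; omega⟩ = w i

variable [TopologicalSpace A]

/-- The automorphism group of a subshift `X`: permutations of `X` which are homeomorphisms
and commute with the shift. -/
def Aut (X : Set (ℤ → A)) : Subgroup (Equiv.Perm ↥X) where
  carrier := {φ | Continuous ⇑φ ∧ Continuous ⇑φ.symm ∧
    (∀ x y : ↥X, shift (x : ℤ → A) = (y : ℤ → A) →
      shift ((φ x : ℤ → A)) = ((φ y : ℤ → A))) ∧
    (∀ x y : ↥X, shift (x : ℤ → A) = (y : ℤ → A) →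
      shift ((φ.symm x : ℤ → A)) = ((φ.symm y : ℤ → A)))}
  one_mem' := ⟨continuous_id, continuous_id, fun _ _ h => h, fun _ _ h => h⟩
  mul_mem' := by
    rintro a b ⟨hac, hac', haσ, haσ'⟩ ⟨hbc, hbc', hbσ, hbσ'⟩
    refine ⟨?_, ?_, ?_, ?_⟩
    · simpa using hac.comp hbc
    · simpa [Equiv.Perm.mul_def] using hbc'.comp hac'
    · intro x y h
      simpa using haσ _ _ (hbσ x y h)
    · intro x y h
      simpa [Equiv.Perm.mul_def] using hbσ' _ _ (haσ' x y h)
  inv_mem' := by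
    rintro a ⟨hac, hac', haσ, haσ'⟩
    exact ⟨hac', by exact hac, fun x y h => haσ' x y h, fun x y h => by exact haσ x y h⟩

/-- `f` is a block code of range `R` representing `φ`. -/
def IsBlockCode (X : Set (ℤ → A)) (R : ℕ) (φ : Equiv.Perm ↥X)
    (f : (Fin (2 * R + 1) → A) → A) : Prop :=
  ∀ (x : ↥X) (i : ℤ), (φ x : ℤ → A) i = f (fun j => (x : ℤ → A) (i + (j : ℤ) - R))

/-- `Aut_R(X)`: automorphisms such that both they and their inverses are given by
sliding block codes of range `R`. -/
def AutR (X : Set (ℤ → A)) (R : ℕ) : Set (Equiv.Perm ↥X) :=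
  {φ | φ ∈ Aut X ∧ (∃ f, IsBlockCode X R φ f) ∧ (∃ g, IsBlockCode X R φ⁻¹ g)}

end Defs

/-- Apply a block code of range `R` to a word, shortening it by `2R`. -/
def applyCode {A : Type*} {R n : ℕ} (f : (Fin (2 * R + 1) → A) → A) (w : Fin n → A) :
    Fin (n - 2 * R) → A :=
  fun i => f (fun j => w ⟨(i : ℕ) + (j : ℕ), by have := i.isLt; have := j.isLt; omega⟩)

section Defs2

variable {A : Type*} [TopologicalSpace A]

/-- `φ` preserves occurrences of `v`. -/
def PreservesOcc (X : Set (ℤ → A)) (φ : Equiv.Perm ↥X) {n : ℕ} (v : Fin n → A) : Prop :=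
  ∀ x : ↥X, OccursAt (x : ℤ → A) v 0 → OccursAt ((φ x : ℤ → A)) v 0

/-- `φ` preserves occurrences of `v` which are at least `D` units away from any occurrence of
the words `u 0, …, u (i-1)`. -/
def PreservesOccAway (X : Set (ℤ → A)) (φ : Equiv.Perm ↥X) {n : ℕ} (v : Fin n → A)
    (D : ℕ) (ml : ℕ → ℕ) (u : ∀ t, Fin (ml t) → A) (i : ℕ) : Prop :=
  ∀ x : ↥X, OccursAt (x : ℤ → A) v 0 →
    (∀ t < i, ∀ p : ℤ, -(D : ℤ) ≤ p → p + ml t ≤ n + D → ¬ OccursAt (x : ℤ → A) (u t) p) →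
    OccursAt ((φ x : ℤ → A)) v 0

end Defs2

/-- A countable discrete group is amenable if it admits a Følner sequence. -/
def FolnerAmenable (G : Type*) [Group G] : Prop :=
  ∃ F : ℕ → Set G, (∀ k, (F k).Finite) ∧
    (∀ g : G, ∀ᶠ k in atTop, g ∈ F k) ∧
    ∀ g : G, Tendsto (fun k => ((symmDiff (g • F k) (F k)).ncard : ℝ) / ((F k).ncard : ℝ))
      atTop (𝓝 0)

namespace SaloExample

abbrev Alph := Fin 6

def pish (s : Alph) : Bool := decide (2 < s.val)
def lp (s : Alph) : Fin 3 := ⟨s.val % 3, Nat.mod_lt _ (by norm_num)⟩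
def comb (P : Bool) (l : Fin 3) : Alph :=
  ⟨l.val + (if P then 3 else 0), by have := l.isLt; cases P <;> simp <;> omega⟩

lemma pish_comb : ∀ (P : Bool) (l : Fin 3), pish (comb P l) = P := by decide
lemma lp_comb : ∀ (P : Bool) (l : Fin 3), lp (comb P l) = l := by decide
lemma comb_pish_lp : ∀ s : Alph, comb (pish s) (lp s) = s := by decide

def swap3 : Fin 3 → Fin 3 := fun l => if l = 1 then 2 else if l = 2 then 1 else 0

lemma swap3_swap3 : ∀ l, swap3 (swap3 l) = l := by decide
lemma swap3_eq_zero : ∀ l, swap3 l = 0 ↔ l = 0 := by decide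
lemma swap3_zero : swap3 0 = 0 := by decide

def X : Set (ℤ → Alph) :=
  {x | (∀ i j : ℤ, pish (x i) → pish (x j) → i = j) ∧
       (∀ i j : ℤ, lp (x i) ≠ 0 → lp (x j) ≠ 0 → i = j)}

lemma zero_mem_X : (fun _ : ℤ => (0 : Alph)) ∈ X := by
  constructor <;> intro i j hi hj <;> simp [pish, lp] at hi

lemma isClosed_X : IsClosed X := by
  have key : ∀ (Q : Alph → Alph → Prop) (i j : ℤ),
      IsClosed {x : ℤ → Alph | Q (x i) (x j)} := by
    intro Q i j
    have : {x : ℤ → Alph | Q (x i) (x j)}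
        = (fun x : ℤ → Alph => (x i, x j)) ⁻¹' {p : Alph × Alph | Q p.1 p.2} := rfl
    rw [this]
    exact (isClosed_discrete _).preimage ((continuous_apply i).prodMk (continuous_apply j))
  have hX : X = (⋂ i : ℤ, ⋂ j : ℤ, {x : ℤ → Alph | pish (x i) → pish (x j) → i = j}) ∩
      (⋂ i : ℤ, ⋂ j : ℤ, {x : ℤ → Alph | lp (x i) ≠ 0 → lp (x j) ≠ 0 → i = j}) := by
    ext x
    simp only [X, Set.mem_setOf_eq, Set.mem_inter_iff, Set.mem_iInter]
  rw [hX]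
  exact IsClosed.inter
    (isClosed_iInter fun i => isClosed_iInter fun j => key (fun a b => pish a → pish b → i = j) i j)
    (isClosed_iInter fun i => isClosed_iInter fun j => key (fun a b => lp a ≠ 0 → lp b ≠ 0 → i = j) i j)

lemma shift_image : shift '' X = X := by
  ext x
  constructor
  · rintro ⟨y, ⟨hy1, hy2⟩, rfl⟩
    constructor
    · intro i j hi hj
      simp only [shift] at hi hj
      have := hy1 (i + 1) (j + 1) hi hj; omega
    · intro i j hi hj
      simp only [shift] at hi hj
      have := hy2 (i + 1) (j + 1) hi hj; omega
  · rintro ⟨h1, h2⟩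
    refine ⟨fun i => x (i - 1), ⟨?_, ?_⟩, ?_⟩
    · intro i j hi hj; have := h1 (i - 1) (j - 1) hi hj; omega
    · intro i j hi hj; have := h2 (i - 1) (j - 1) hi hj; omega
    · funext i; show x (i + 1 - 1) = x i; congr 1; omega

def Wcond {n : ℕ} (w : Fin n → Alph) : Prop :=
  (∀ i j : Fin n, pish (w i) → pish (w j) → i = j) ∧
  (∀ i j : Fin n, lp (w i) ≠ 0 → lp (w j) ≠ 0 → i = j)

lemma inLanguage_iff {n : ℕ} (w : Fin n → Alph) : InLanguage X w ↔ Wcond w := by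
  constructor
  · rintro ⟨x, ⟨hx1, hx2⟩, hocc⟩
    have he : ∀ i : Fin n, x (i : ℤ) = w i := by
      intro i
      have := hocc i
      simpa using this
    constructor
    · intro i j hi hj
      rw [← he i] at hi; rw [← he j] at hj
      have := hx1 _ _ hi hj
      exact Fin.ext (by exact_mod_cast this)
    · intro i j hi hj
      rw [← he i] at hi; rw [← he j] at hj
      have := hx2 _ _ hi hj
      exact Fin.ext (by exact_mod_cast this)
  · rintro ⟨h1, h2⟩
    set x : ℤ → Alph := fun k => if h : 0 ≤ k ∧ k < n then w ⟨k.toNat, by omega⟩ else 0 with hx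
    have hval : ∀ i : Fin n, x (i : ℤ) = w i := by
      intro i
      have hc : (0 : ℤ) ≤ (i : ℤ) ∧ (i : ℤ) < n := ⟨Int.natCast_nonneg _, by exact_mod_cast i.isLt⟩
      simp only [hx, dif_pos hc]
      congr 1
    have hrange : ∀ k : ℤ, x k ≠ 0 → ∃ i : Fin n, (i : ℤ) = k ∧ x k = w i := by
      intro k hk
      by_cases hc : 0 ≤ k ∧ k < n
      · refine ⟨⟨k.toNat, by omega⟩, ?_, ?_⟩
        · simp; omega
        · simp only [hx, dif_pos hc]
      · exfalso; apply hk; simp only [hx, dif_neg hc]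
    have hpz : pish 0 = false := by decide
    have hlz : lp 0 = 0 := by decide
    refine ⟨x, ⟨?_, ?_⟩, ?_⟩
    · intro i j hi hj
      obtain ⟨a, ha, hva⟩ := hrange i (by intro h; rw [h, hpz] at hi; exact absurd hi (by simp))
      obtain ⟨b, hb, hvb⟩ := hrange j (by intro h; rw [h, hpz] at hj; exact absurd hj (by simp))
      rw [hva] at hi; rw [hvb] at hj
      have := h1 a b hi hj
      rw [← ha, ← hb, this]
    · intro i j hi hj
      obtain ⟨a, ha, hva⟩ := hrange i (by intro h; rw [h, hlz] at hi; exact hi rfl)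
      obtain ⟨b, hb, hvb⟩ := hrange j (by intro h; rw [h, hlz] at hj; exact hj rfl)
      rw [hva] at hi; rw [hvb] at hj
      have := h2 a b hi hj
      rw [← ha, ← hb, this]
    · intro i; simpa using hval i

/-- lower bound injection -/
def lowMap (n : ℕ) (p : Fin n × Fin n) : Fin n → Alph :=
  fun k => comb (decide (k = p.1)) (if k = p.2 then 1 else 0)

lemma lowMap_wcond (n : ℕ) (p : Fin n × Fin n) : Wcond (lowMap n p) := by
  constructor
  · intro i j hi hj
    rw [lowMap, pish_comb] at hi hj
    rw [decide_eq_true_eq] at hi hj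
    rw [hi, hj]
  · intro i j hi hj
    rw [lowMap, lp_comb] at hi hj
    by_cases h1 : i = p.2
    · by_cases h2 : j = p.2
      · rw [h1, h2]
      · rw [if_neg h2] at hj; exact absurd rfl hj
    · rw [if_neg h1] at hi; exact absurd rfl hi

lemma lowMap_inj (n : ℕ) : Function.Injective (lowMap n) := by
  intro p q h
  have h1 : lowMap n p p.1 = lowMap n q p.1 := by rw [h]
  have h2 : lowMap n p p.2 = lowMap n q p.2 := by rw [h]
  have e1 : p.1 = q.1 := by
    have h := congrArg pish h1
    rw [lowMap, lowMap, pish_comb, pish_comb] at h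
    rw [decide_eq_decide] at h
    exact h.mp rfl
  have e2 : p.2 = q.2 := by
    have := congrArg lp h2
    rw [lowMap, lowMap, lp_comb, lp_comb] at this
    simp only [if_pos rfl] at this
    by_cases hq : p.2 = q.2
    · exact hq
    · rw [if_neg hq] at this; exact absurd this (by decide)
  exact Prod.ext e1 e2

lemma complexity_lower (n : ℕ) : n * n ≤ complexity X n := by
  have hsub : lowMap n '' Set.univ ⊆ {w : Fin n → Alph | InLanguage X w} := by
    rintro _ ⟨p, -, rfl⟩
    rw [Set.mem_setOf_eq, inLanguage_iff]
    exact lowMap_wcond n p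
  have hcard : (lowMap n '' Set.univ).ncard = n * n := by
    rw [Set.ncard_image_of_injective _ (lowMap_inj n), Set.ncard_univ]
    simp [Nat.card_eq_fintype_card]
  calc n * n = (lowMap n '' Set.univ).ncard := hcard.symm
    _ ≤ complexity X n := Set.ncard_le_ncard hsub (Set.toFinite _)

/-- upper bound injection -/
noncomputable def upMap (n : ℕ) (w : Fin n → Alph) :
    Option (Fin n × Alph) × Option (Fin n × Alph) :=
  (if h : ∃ i, pish (w i) then some (h.choose, w h.choose) else none,
   if h : ∃ i, lp (w i) ≠ 0 then some (h.choose, w h.choose) else none)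

lemma upMap_fst {n : ℕ} {w : Fin n → Alph} (hw : Wcond w) {k : Fin n} (hk : pish (w k)) :
    (upMap n w).1 = some (k, w k) := by
  have h : ∃ i, pish (w i) := ⟨k, hk⟩
  have hc : h.choose = k := hw.1 _ _ h.choose_spec hk
  simp only [upMap, dif_pos h, hc]

lemma upMap_snd {n : ℕ} {w : Fin n → Alph} (hw : Wcond w) {k : Fin n} (hk : lp (w k) ≠ 0) :
    (upMap n w).2 = some (k, w k) := by
  have h : ∃ i, lp (w i) ≠ 0 := ⟨k, hk⟩
  have hc : h.choose = k := hw.2 _ _ h.choose_spec hk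
  simp only [upMap, dif_pos h, hc]

lemma upMap_pish_eq {n : ℕ} {w w' : Fin n → Alph} (hw : Wcond w)
    (h : upMap n w = upMap n w') {k : Fin n} (hk : pish (w k)) : w' k = w k := by
  have h1 : (upMap n w').1 = some (k, w k) := by rw [← h]; exact upMap_fst hw hk
  by_cases h' : ∃ i, pish (w' i)
  · simp only [upMap, dif_pos h'] at h1
    obtain ⟨e1, e2⟩ := Prod.mk.injEq .. ▸ Option.some.injEq _ _ |>.mp h1
    subst e1; exact e2
  · simp only [upMap, dif_neg h'] at h1
    exact absurd h1 (by simp)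

lemma upMap_lp_eq {n : ℕ} {w w' : Fin n → Alph} (hw : Wcond w)
    (h : upMap n w = upMap n w') {k : Fin n} (hk : lp (w k) ≠ 0) : w' k = w k := by
  have h1 : (upMap n w').2 = some (k, w k) := by rw [← h]; exact upMap_snd hw hk
  by_cases h' : ∃ i, lp (w' i) ≠ 0
  · simp only [upMap, dif_pos h'] at h1
    obtain ⟨e1, e2⟩ := Prod.mk.injEq .. ▸ Option.some.injEq _ _ |>.mp h1
    subst e1; exact e2
  · simp only [upMap, dif_neg h'] at h1
    exact absurd h1 (by simp)

lemma upMap_injOn (n : ℕ) : Set.InjOn (upMap n) {w : Fin n → Alph | Wcond w} := by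
  intro w hw w' hw' h
  funext k
  by_cases hp : pish (w k)
  · exact (upMap_pish_eq hw h hp).symm
  by_cases hl : lp (w k) ≠ 0
  · exact (upMap_lp_eq hw h hl).symm
  by_cases hp' : pish (w' k)
  · exact upMap_pish_eq hw' h.symm hp'
  by_cases hl' : lp (w' k) ≠ 0
  · exact upMap_lp_eq hw' h.symm hl'
  · push_neg at hl hl'
    have hp0 : pish (w k) = false := by simpa using hp
    have hp0' : pish (w' k) = false := by simpa using hp'
    have e1 : w k = comb false 0 := by
      conv_lhs => rw [← comb_pish_lp (w k)]
      rw [hp0, hl]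
    have e2 : w' k = comb false 0 := by
      conv_lhs => rw [← comb_pish_lp (w' k)]
      rw [hp0', hl']
    rw [e1, e2]

lemma complexity_upper (n : ℕ) : complexity X n ≤ (6 * n + 1) * (6 * n + 1) := by
  have hset : {w : Fin n → Alph | InLanguage X w} = {w | Wcond w} := by
    ext w; exact inLanguage_iff w
  rw [complexity, hset]
  have := Set.ncard_le_ncard_of_injOn (upMap n)
    (fun w _ => Set.mem_univ (upMap n w)) (upMap_injOn n) (Set.toFinite _)
  refine this.trans ?_
  rw [Set.ncard_univ]
  simp [Nat.card_eq_fintype_card]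
  ring_nf
  omega

/-! ### The two automorphisms -/

def Fmap (x : ℤ → Alph) : ℤ → Alph := fun i => comb (pish (x i)) (lp (x (i - 1)))
def Fmapinv (x : ℤ → Alph) : ℤ → Alph := fun i => comb (pish (x i)) (lp (x (i + 1)))
def Gmap (x : ℤ → Alph) : ℤ → Alph := fun i =>
  comb (pish (x i)) (if pish (x (i - 1)) then swap3 (lp (x (i - 1))) else lp (x (i - 1)))
def Gmapinv (x : ℤ → Alph) : ℤ → Alph := fun i =>
  comb (pish (x i)) (if pish (x i) then swap3 (lp (x (i + 1))) else lp (x (i + 1)))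

lemma sub_add_one (i : ℤ) : i - 1 + 1 = i := by omega
lemma add_sub_one (i : ℤ) : i + 1 - 1 = i := by omega

lemma Fmapinv_Fmap (x : ℤ → Alph) : Fmapinv (Fmap x) = x := by
  funext i
  simp only [Fmapinv, Fmap, pish_comb, lp_comb, add_sub_one]
  exact comb_pish_lp (x i)

lemma Fmap_Fmapinv (x : ℤ → Alph) : Fmap (Fmapinv x) = x := by
  funext i
  simp only [Fmapinv, Fmap, pish_comb, lp_comb, sub_add_one]
  exact comb_pish_lp (x i)

lemma Gmapinv_Gmap (x : ℤ → Alph) : Gmapinv (Gmap x) = x := by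
  funext i
  simp only [Gmapinv, Gmap, pish_comb, lp_comb, add_sub_one]
  by_cases h : pish (x i) = true
  · rw [if_pos h, if_pos h, swap3_swap3]
    exact comb_pish_lp (x i)
  · rw [if_neg h, if_neg h]
    exact comb_pish_lp (x i)

lemma Gmap_Gmapinv (x : ℤ → Alph) : Gmap (Gmapinv x) = x := by
  funext i
  simp only [Gmapinv, Gmap, pish_comb, lp_comb, sub_add_one]
  by_cases h : pish (x (i - 1)) = true
  · rw [if_pos h, if_pos h, swap3_swap3]
    exact comb_pish_lp (x i)
  · rw [if_neg h, if_neg h]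
    exact comb_pish_lp (x i)

lemma ite_swap3_eq_zero (P : Bool) (l : Fin 3) :
    (if P = true then swap3 l else l) = 0 ↔ l = 0 := by
  cases P <;> simp [swap3_eq_zero]

lemma Fmap_mem {x : ℤ → Alph} (hx : x ∈ X) : Fmap x ∈ X := by
  obtain ⟨h1, h2⟩ := hx
  constructor
  · intro i j hi hj
    rw [Fmap, pish_comb] at hi hj
    exact h1 i j hi hj
  · intro i j hi hj
    rw [Fmap, lp_comb] at hi hj
    have := h2 _ _ hi hj; omega

lemma Fmapinv_mem {x : ℤ → Alph} (hx : x ∈ X) : Fmapinv x ∈ X := by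
  obtain ⟨h1, h2⟩ := hx
  constructor
  · intro i j hi hj
    rw [Fmapinv, pish_comb] at hi hj
    exact h1 i j hi hj
  · intro i j hi hj
    rw [Fmapinv, lp_comb] at hi hj
    have := h2 _ _ hi hj; omega

lemma Gmap_mem {x : ℤ → Alph} (hx : x ∈ X) : Gmap x ∈ X := by
  obtain ⟨h1, h2⟩ := hx
  constructor
  · intro i j hi hj
    rw [Gmap, pish_comb] at hi hj
    exact h1 i j hi hj
  · intro i j hi hj
    rw [Gmap, lp_comb] at hi hj
    rw [ne_eq, ite_swap3_eq_zero] at hi hj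
    have := h2 _ _ hi hj; omega

lemma Gmapinv_mem {x : ℤ → Alph} (hx : x ∈ X) : Gmapinv x ∈ X := by
  obtain ⟨h1, h2⟩ := hx
  constructor
  · intro i j hi hj
    rw [Gmapinv, pish_comb] at hi hj
    exact h1 i j hi hj
  · intro i j hi hj
    rw [Gmapinv, lp_comb] at hi hj
    rw [ne_eq, ite_swap3_eq_zero] at hi hj
    have := h2 _ _ hi hj; omega

def phi : Equiv.Perm ↥X where
  toFun x := ⟨Fmap x, Fmap_mem x.2⟩
  invFun x := ⟨Fmapinv x, Fmapinv_mem x.2⟩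
  left_inv x := Subtype.ext (Fmapinv_Fmap x)
  right_inv x := Subtype.ext (Fmap_Fmapinv x)

def psi : Equiv.Perm ↥X where
  toFun x := ⟨Gmap x, Gmap_mem x.2⟩
  invFun x := ⟨Gmapinv x, Gmapinv_mem x.2⟩
  left_inv x := Subtype.ext (Gmapinv_Gmap x)
  right_inv x := Subtype.ext (Gmap_Gmapinv x)

lemma cont_aux (h : Alph → Alph → Alph) :
    Continuous (fun x : ↥X => fun i : ℤ => h ((x : ℤ → Alph) i) ((x : ℤ → Alph) (i - 1))) := by
  refine continuous_pi fun i => ?_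
  have hc : Continuous (fun p : Alph × Alph => h p.1 p.2) := continuous_of_discreteTopology
  show Continuous ((fun p : Alph × Alph => h p.1 p.2) ∘
    (fun x : ↥X => (((x : ℤ → Alph) i), ((x : ℤ → Alph) (i - 1)))))
  exact hc.comp (Continuous.prodMk ((continuous_apply i).comp continuous_subtype_val)
    ((continuous_apply (i - 1)).comp continuous_subtype_val))

lemma cont_aux' (h : Alph → Alph → Alph) :
    Continuous (fun x : ↥X => fun i : ℤ => h ((x : ℤ → Alph) i) ((x : ℤ → Alph) (i + 1))) := by
  refine continuous_pi fun i => ?_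
  have hc : Continuous (fun p : Alph × Alph => h p.1 p.2) := continuous_of_discreteTopology
  show Continuous ((fun p : Alph × Alph => h p.1 p.2) ∘
    (fun x : ↥X => (((x : ℤ → Alph) i), ((x : ℤ → Alph) (i + 1)))))
  exact hc.comp (Continuous.prodMk ((continuous_apply i).comp continuous_subtype_val)
    ((continuous_apply (i + 1)).comp continuous_subtype_val))

lemma shift_elim {x y : ℤ → Alph} (h : shift x = y) : ∀ j : ℤ, y j = x (j + 1) := by
  intro j; rw [← h]; rfl

lemma phi_mem_Aut : phi ∈ Aut X := by
  refine ⟨?_, ?_, ?_, ?_⟩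
  · show Continuous (fun x : ↥X => (⟨Fmap ↑x, Fmap_mem x.2⟩ : ↥X))
    exact Continuous.subtype_mk (cont_aux (fun a b => comb (pish a) (lp b))) _
  · show Continuous (fun x : ↥X => (⟨Fmapinv ↑x, Fmapinv_mem x.2⟩ : ↥X))
    exact Continuous.subtype_mk (cont_aux' (fun a b => comb (pish a) (lp b))) _
  · intro x y h
    funext i
    show Fmap (x : ℤ → Alph) (i + 1) = Fmap (y : ℤ → Alph) i
    simp only [Fmap, shift_elim h, add_sub_one, sub_add_one]
  · intro x y h
    funext i
    show Fmapinv (x : ℤ → Alph) (i + 1) = Fmapinv (y : ℤ → Alph) i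
    simp only [Fmapinv, shift_elim h]

lemma psi_mem_Aut : psi ∈ Aut X := by
  refine ⟨?_, ?_, ?_, ?_⟩
  · show Continuous (fun x : ↥X => (⟨Gmap ↑x, Gmap_mem x.2⟩ : ↥X))
    exact Continuous.subtype_mk
      (cont_aux (fun a b => comb (pish a) (if pish b then swap3 (lp b) else lp b))) _
  · show Continuous (fun x : ↥X => (⟨Gmapinv ↑x, Gmapinv_mem x.2⟩ : ↥X))
    exact Continuous.subtype_mk
      (cont_aux' (fun a b => comb (pish a) (if pish a then swap3 (lp b) else lp b))) _
  · intro x y h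
    funext i
    show Gmap (x : ℤ → Alph) (i + 1) = Gmap (y : ℤ → Alph) i
    simp only [Gmap, shift_elim h, add_sub_one, sub_add_one]
  · intro x y h
    funext i
    show Gmapinv (x : ℤ → Alph) (i + 1) = Gmapinv (y : ℤ → Alph) i
    simp only [Gmapinv, shift_elim h]

/-! ### Free semigroup dynamics -/

def pt (l : Fin 3) (d : ℤ) : ℤ → Alph := fun i => comb (decide (i = 0)) (if i = d then l else 0)

lemma pt_mem (l : Fin 3) (d : ℤ) : pt l d ∈ X := by
  constructor
  · intro i j hi hj
    rw [pt, pish_comb, decide_eq_true_eq] at hi hj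
    rw [hi, hj]
  · intro i j hi hj
    rw [pt, lp_comb] at hi hj
    by_cases h1 : i = d
    · by_cases h2 : j = d
      · rw [h1, h2]
      · rw [if_neg h2] at hj; exact absurd rfl hj
    · rw [if_neg h1] at hi; exact absurd rfl hi

lemma Fmap_pt (l : Fin 3) (d : ℤ) : Fmap (pt l d) = pt l (d + 1) := by
  funext i
  simp only [Fmap, pt, pish_comb, lp_comb]
  congr 1
  exact if_congr (by omega) rfl rfl

lemma Gmap_pt (l : Fin 3) (d : ℤ) :
    Gmap (pt l d) = pt (if d = 0 then swap3 l else l) (d + 1) := by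
  funext i
  simp only [Gmap, pt, pish_comb, lp_comb]
  congr 1
  by_cases hd : i = d + 1
  · subst hd
    rw [show d + 1 - 1 = d from by omega, if_pos rfl, if_pos rfl]
    by_cases h0 : d = 0 <;> simp [h0]
  · rw [if_neg (show ¬ (i - 1 = d) from by omega), if_neg hd]
    by_cases h0 : i - 1 = 0 <;> simp [h0, swap3_zero]

lemma phi_pt (l : Fin 3) (d : ℤ) (h : pt l d ∈ X) :
    phi ⟨pt l d, h⟩ = ⟨pt l (d + 1), pt_mem _ _⟩ :=
  Subtype.ext (Fmap_pt l d)

lemma psi_pt (l : Fin 3) (d : ℤ) (h : pt l d ∈ X) :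
    psi ⟨pt l d, h⟩ = ⟨pt (if d = 0 then swap3 l else l) (d + 1), pt_mem _ _⟩ :=
  Subtype.ext (Gmap_pt l d)

noncomputable def fgen : Bool → Equiv.Perm ↥X := fun b => if b then phi else psi

def runL : List Bool → Fin 3 → ℤ → Fin 3
  | [], l, _ => l
  | b :: bs, l, d =>
      if b then runL bs l d
      else if d + bs.length = 0 then swap3 (runL bs l d) else runL bs l d

lemma prod_pt : ∀ (bs : List Bool) (l : Fin 3) (d : ℤ) (h : pt l d ∈ X),
    ((bs.map fgen).prod) ⟨pt l d, h⟩ = ⟨pt (runL bs l d) (d + bs.length), pt_mem _ _⟩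
  | [], l, d, h => by
      simp only [List.map_nil, List.prod_nil, runL]
      exact Subtype.ext (by norm_num)
  | b :: bs, l, d, h => by
      rw [List.map_cons, List.prod_cons, Equiv.Perm.mul_apply, prod_pt bs l d h]
      cases b
      · show psi _ = _
        rw [psi_pt]
        refine Subtype.ext ?_
        show pt _ _ = pt _ _
        rw [show runL (false :: bs) l d
            = (if d + (bs.length : ℤ) = 0 then swap3 (runL bs l d) else runL bs l d) from by
          simp [runL]]
        congr 1
        push_cast [List.length_cons]
        ring
      · show phi _ = _
        rw [phi_pt]
        refine Subtype.ext ?_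
        show pt _ _ = pt _ _
        rw [show runL (true :: bs) l d = runL bs l d from by simp [runL]]
        congr 1
        push_cast [List.length_cons]
        ring

lemma runL_ne_zero : ∀ (bs : List Bool) (l : Fin 3), l ≠ 0 → ∀ d : ℤ, runL bs l d ≠ 0
  | [], l, hl, d => hl
  | b :: bs, l, hl, d => by
      have ih := runL_ne_zero bs l hl d
      cases b
      · show ¬ (if d + (bs.length : ℤ) = 0 then swap3 (runL bs l d) else runL bs l d) = 0
        by_cases hc : d + (bs.length : ℤ) = 0
        · rw [if_pos hc, swap3_eq_zero]; exact ih
        · rw [if_neg hc]; exact ih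
      · exact ih

lemma runL_of_nonpos : ∀ (bs : List Bool) (l : Fin 3) (d : ℤ),
    d + bs.length ≤ 0 → runL bs l d = l
  | [], l, d, _ => rfl
  | b :: bs, l, d, hd => by
      have hlen : (((b :: bs).length : ℕ) : ℤ) = bs.length + 1 := by rw [List.length_cons]; push_cast; ring
      rw [hlen] at hd
      have h1 : ¬ (d + (bs.length : ℤ) = 0) := by omega
      have ih := runL_of_nonpos bs l d (by omega)
      cases b
      · show (if d + (bs.length : ℤ) = 0 then swap3 (runL bs l d) else runL bs l d) = l
        rw [if_neg h1]; exact ih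
      · exact ih

lemma runL_get : ∀ (bs : List Bool) (k : ℕ) (hk : k < bs.length),
    runL bs 1 ((k : ℤ) + 1 - bs.length) = if bs[k] then 1 else 2
  | b :: bs, 0, hk => by
      have hd : ((0 : ℕ) : ℤ) + 1 - ((b :: bs).length : ℤ) = -(bs.length : ℤ) := by
        push_cast [List.length_cons]; ring
      rw [hd]
      have hin : runL bs 1 (-(bs.length : ℤ)) = 1 := runL_of_nonpos bs 1 _ (by omega)
      have hc : -(bs.length : ℤ) + bs.length = 0 := by ring
      cases b
      · show (if -(bs.length : ℤ) + bs.length = 0 then swap3 (runL bs 1 (-(bs.length:ℤ)))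
          else runL bs 1 (-(bs.length:ℤ))) = _
        rw [if_pos hc, hin]
        rfl
      · show runL bs 1 (-(bs.length : ℤ)) = _
        rw [hin]; rfl
  | b :: bs, k + 1, hk => by
      have hk' : k < bs.length := by simpa [List.length_cons] using hk
      have hd : ((k + 1 : ℕ) : ℤ) + 1 - ((b :: bs).length : ℤ)
          = (k : ℤ) + 1 - (bs.length : ℤ) := by push_cast [List.length_cons]; ring
      rw [hd]
      have hc : ¬ ((k : ℤ) + 1 - bs.length + bs.length = 0) := by omega
      have ih := runL_get bs k hk'
      have hg : (b :: bs)[k + 1] = bs[k] := List.getElem_cons_succ ..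
      rw [hg]
      cases b
      · show (if (k : ℤ) + 1 - bs.length + bs.length = 0 then _ else _) = _
        rw [if_neg hc]; exact ih
      · exact ih

lemma lift_eq_prod : ∀ (t : List Bool) (h : Bool),
    FreeSemigroup.lift fgen ⟨h, t⟩ = ((h :: t).map fgen).prod
  | [], h => by simp [FreeSemigroup.lift]
  | a :: t, h => by
      have e : (⟨h, a :: t⟩ : FreeSemigroup Bool) = FreeSemigroup.of h * ⟨a, t⟩ := rfl
      rw [e, map_mul, FreeSemigroup.lift_of, lift_eq_prod t a]
      simp

lemma fgen_injective : Function.Injective ⇑(FreeSemigroup.lift fgen) := by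
  rintro ⟨hx, tx⟩ ⟨hy, ty⟩ hxy
  rw [lift_eq_prod, lift_eq_prod] at hxy
  have happ : ∀ (l : Fin 3) (d : ℤ),
      pt (runL (hx :: tx) l d) (d + (hx :: tx).length)
        = pt (runL (hy :: ty) l d) (d + (hy :: ty).length) := by
    intro l d
    have h1 := prod_pt (hx :: tx) l d (pt_mem l d)
    have h2 := prod_pt (hy :: ty) l d (pt_mem l d)
    rw [hxy] at h1
    rw [h1] at h2
    exact Subtype.ext_iff.mp h2
  have hlen : (hx :: tx).length = (hy :: ty).length := by
    by_contra hne
    have e := congrFun (happ 1 0) (((hx :: tx).length : ℤ))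
    simp only [pt] at e
    have e' := congrArg lp e
    rw [lp_comb, lp_comb] at e'
    rw [if_pos (show (((hx :: tx).length : ℕ) : ℤ) = 0 + ((hx :: tx).length : ℤ) from by omega),
      if_neg (show ¬ (((hx :: tx).length : ℕ) : ℤ) = 0 + ((hy :: ty).length : ℤ) from by omega)]
      at e'
    exact runL_ne_zero (hx :: tx) 1 (by decide) 0 e'
  have hget : ∀ (k : ℕ) (h1 : k < (hx :: tx).length) (h2 : k < (hy :: ty).length),
      (hx :: tx)[k] = (hy :: ty)[k] := by
    intro k h1 h2
    have e := congrFun (happ 1 ((k : ℤ) + 1 - (hx :: tx).length)) ((k : ℤ) + 1)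
    rw [runL_get (hx :: tx) k h1] at e
    have r2 := runL_get (hy :: ty) k h2
    rw [← hlen] at r2
    rw [r2] at e
    simp only [pt] at e
    have e' := congrArg lp e
    rw [lp_comb, lp_comb] at e'
    rw [if_pos (show ((k : ℤ) + 1) = (k : ℤ) + 1 - (hx :: tx).length + (hx :: tx).length from by
        omega),
      if_pos (show ((k : ℤ) + 1) = (k : ℤ) + 1 - (hx :: tx).length + (hy :: ty).length from by
        omega)] at e'
    revert e'
    cases hb1 : (hx :: tx)[k] <;> cases hb2 : (hy :: ty)[k] <;> intro e' <;>
      first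
        | rfl
        | (exfalso; rw [if_pos rfl] at e' <;> simp at e' <;> exact absurd e' (by decide))
  have hL : hx :: tx = hy :: ty := List.ext_getElem hlen hget
  injection hL with e1 e2
  rw [e1, e2]

end SaloExample

/-- **Theorem (Salo–Schraudner / Section 5 example).** There exists a subshift `(X, σ)`
over a finite alphabet whose complexity function grows quadratically (`P_X(n) = Θ(n²)`)
and whose automorphism group contains a free semigroup of rank 2. -/
theorem exists_quadratic_subshift_with_free_semigroup :
    ∃ (N : ℕ) (X : Set (ℤ → Fin N)),
      X.Nonempty ∧ IsClosed X ∧ shift '' X = X ∧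
      (∃ c₁ c₂ : ℝ, 0 < c₁ ∧ 0 < c₂ ∧ ∀ᶠ n : ℕ in atTop,
        c₁ * (n : ℝ) ^ 2 ≤ (complexity X n : ℝ) ∧ (complexity X n : ℝ) ≤ c₂ * (n : ℝ) ^ 2) ∧
      ∃ φ ψ : Equiv.Perm ↥X, φ ∈ Aut X ∧ ψ ∈ Aut X ∧
        Function.Injective
          ⇑(FreeSemigroup.lift (fun b : Bool => if b then φ else ψ) :
            FreeSemigroup Bool →ₙ* Equiv.Perm ↥X) := by
  refine ⟨6, SaloExample.X, ⟨_, SaloExample.zero_mem_X⟩, SaloExample.isClosed_X,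
    SaloExample.shift_image, ⟨1, 49, one_pos, by norm_num, ?_⟩,
    SaloExample.phi, SaloExample.psi, SaloExample.phi_mem_Aut, SaloExample.psi_mem_Aut, ?_⟩
  · filter_upwards [eventually_ge_atTop 1] with n hn
    have hn' : (1 : ℝ) ≤ (n : ℝ) := by exact_mod_cast hn
    constructor
    · calc (1 : ℝ) * (n : ℝ) ^ 2 = ((n * n : ℕ) : ℝ) := by push_cast; ring
        _ ≤ (complexity SaloExample.X n : ℝ) :=
            Nat.cast_le.mpr (SaloExample.complexity_lower n)
    · calc (complexity SaloExample.X n : ℝ) ≤ (((6 * n + 1) * (6 * n + 1) : ℕ) : ℝ) :=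
            Nat.cast_le.mpr (SaloExample.complexity_upper n)
        _ ≤ 49 * (n : ℝ) ^ 2 := by push_cast; nlinarith [hn']
  · exact SaloExample.fgen_injective
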